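/- (Tensor stability of the cancellation condition) Let k ∈ ℤ₊ and let {H_s^{(1)} : s ∈ ℝ₊^k} and {H_s^{(2)} : s ∈ ℝ₊^k} be families of bounded operators on L²(ℝ^{d₁}) and L²(ℝ^{d₂}) respectively such that for every K ⊆ [k] and admissible s, h (i.e. s and s+h in a common cube Q), ‖Δ_h^K H_s^{(i)}‖_{L²→L²} ≲ Π_{j ∈ K} (h_j/s_j). Then the tensor product family {H_s^{(1)} ⊗ H_s^{(2)} : s ∈ ℝ₊^k} on L²(ℝ^{d₁+d₂}) satisfies the same estimate, with implicit constant depending on k: for all K ⊆ [k] and admissible s, h, ‖Δ_h^K (H_s^{(1)} ⊗ H_s^{(2)})‖_{L²→L²} ≲_k Π_{j ∈ K} (h_j/s_j). -/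

import Mathlib

open Set MeasureTheory ENNReal NNReal

/-- Mixed partial difference operator `Δ_h^K` of a family `H` of vectors parametrized by
`s ∈ ℝ^k`, in closed form: `Δ_h^K H_s = Σ_{U ⊆ K} (−1)^{|K∖U|} H_{s + Σ_{i∈U} h_i e_i}`. -/
noncomputable def deltaK {k : ℕ} {E : Type*} [AddCommGroup E] [Module ℂ E]
    (H : (Fin k → ℝ) → E) (K : Finset (Fin k)) (h s : Fin k → ℝ) : E :=
  ∑ U ∈ K.powerset,
    ((-1 : ℂ) ^ (K.card - U.card)) • H (fun i => if i ∈ U then s i + h i else s i)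

namespace Stmt9Aux

open Filter Finset

variable {X Y : Type*} [MeasurableSpace X] [MeasurableSpace Y]
variable {μ : Measure X} {ν : Measure Y}

lemma coeFn_finsum {α : Type*} [MeasurableSpace α] {m : Measure α} {ι : Type*}
    (t : Finset ι) (f : ι → Lp ℂ 2 m) :
    ⇑(∑ i ∈ t, f i) =ᵐ[m] fun x => ∑ i ∈ t, f i x := by
  classical
  induction t using Finset.induction_on with
  | empty => simp only [Finset.sum_empty]; exact Lp.coeFn_zero ℂ 2 m
  | insert a s hnotmem ih =>
    rw [Finset.sum_insert hnotmem]
    filter_upwards [Lp.coeFn_add (f a) (∑ i ∈ s, f i), ih] with x hx hx2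
    rw [hx]
    simp only [Pi.add_apply, hx2]
    rw [Finset.sum_insert hnotmem]

lemma coeFn_finsum_smul {α : Type*} [MeasurableSpace α] {m : Measure α} {ι : Type*}
    (t : Finset ι) (c : ι → ℂ) (u : ι → Lp ℂ 2 m) :
    ⇑(∑ i ∈ t, c i • u i) =ᵐ[m] fun x => ∑ i ∈ t, c i * u i x := by
  have h1 := coeFn_finsum t (fun i => c i • u i)
  have h2 : ∀ᵐ x ∂m, ∀ i ∈ t, (c i • u i : Lp ℂ 2 m) x = c i * u i x := by
    rw [Filter.eventually_all_finset]
    intro i _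
    filter_upwards [Lp.coeFn_smul (c i) (u i)] with x hx
    simpa using hx
  filter_upwards [h1, h2] with x hx hx2
  rw [hx]
  exact Finset.sum_congr rfl hx2

lemma eLpNorm_two_eq {α : Type*} [MeasurableSpace α] {m : Measure α} (f : α → ℂ) :
    eLpNorm f 2 m = (∫⁻ x, (‖f x‖₊ : ℝ≥0∞) ^ (2:ℝ) ∂m) ^ (1/2 : ℝ) := by
  rw [eLpNorm_eq_lintegral_rpow_enorm_toReal (by norm_num) (by norm_num)]
  norm_num
  simp only [enorm_eq_nnnorm]

lemma lintegral_sq_eq {α : Type*} [MeasurableSpace α] {m : Measure α} (f : α → ℂ) :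
    ∫⁻ x, (‖f x‖₊ : ℝ≥0∞) ^ (2:ℝ) ∂m = (eLpNorm f 2 m) ^ (2:ℝ) := by
  rw [eLpNorm_two_eq, ← ENNReal.rpow_mul]
  norm_num

lemma enorm_Lp {α : Type*} [MeasurableSpace α] {m : Measure α} (u : Lp ℂ 2 m) :
    (‖u‖₊ : ℝ≥0∞) = eLpNorm u 2 m := by
  rw [Lp.nnnorm_def, ENNReal.coe_toNNReal (Lp.eLpNorm_ne_top u)]

lemma aem_sq {α : Type*} [MeasurableSpace α] {m : Measure α} {F : α → ℂ}
    (hF : AEStronglyMeasurable F m) :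
    AEMeasurable (fun z => (‖F z‖₊ : ℝ≥0∞) ^ (2:ℝ)) m :=
  hF.aemeasurable.nnnorm.coe_nnreal_ennreal.pow_const _

lemma tensor_aesm [SigmaFinite μ] [SigmaFinite ν] {f : X → ℂ} {g : Y → ℂ}
    (hf : AEStronglyMeasurable f μ) (hg : AEStronglyMeasurable g ν) :
    AEStronglyMeasurable (fun z : X × Y => f z.1 * g z.2) (μ.prod ν) :=
  ((hf.comp_quasiMeasurePreserving Measure.quasiMeasurePreserving_fst).mul
    (hg.comp_quasiMeasurePreserving Measure.quasiMeasurePreserving_snd))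

lemma sum_tensor_aesm [SigmaFinite μ] [SigmaFinite ν] {ι : Type*} (t : Finset ι)
    (f : ι → Lp ℂ 2 μ) (g : ι → Lp ℂ 2 ν) :
    AEStronglyMeasurable (fun z : X × Y => ∑ i ∈ t, f i z.1 * g i z.2) (μ.prod ν) := by
  have := Finset.aestronglyMeasurable_sum t
    (f := fun i (z : X × Y) => f i z.1 * g i z.2) (μ := μ.prod ν)
    (fun i _ => tensor_aesm (Lp.aestronglyMeasurable (f i)) (Lp.aestronglyMeasurable (g i)))
  simpa [Finset.sum_fn] using this

/-- Fubini estimate: applying an operator in the first variable. -/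
lemma fubini_left [SigmaFinite μ] [SigmaFinite ν]
    (A : Lp ℂ 2 μ →L[ℂ] Lp ℂ 2 μ) {ι : Type*} (t : Finset ι)
    (f : ι → Lp ℂ 2 μ) (g : ι → Lp ℂ 2 ν) :
    eLpNorm (fun z : X × Y => ∑ i ∈ t, (A (f i)) z.1 * g i z.2) 2 (μ.prod ν)
      ≤ (‖A‖₊ : ℝ≥0∞) * eLpNorm (fun z : X × Y => ∑ i ∈ t, f i z.1 * g i z.2) 2 (μ.prod ν) := by
  classical
  rw [eLpNorm_two_eq, eLpNorm_two_eq]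
  -- inner square-integral identity for fixed y
  have key : ∀ (φ : ι → Lp ℂ 2 μ) (y : Y),
      ∫⁻ x, (‖∑ i ∈ t, (φ i) x * (g i) y‖₊ : ℝ≥0∞) ^ (2:ℝ) ∂μ
        = ((‖(∑ i ∈ t, ((g i) y) • φ i : Lp ℂ 2 μ)‖₊ : ℝ≥0∞)) ^ (2:ℝ) := by
    intro φ y
    set w : Lp ℂ 2 μ := ∑ i ∈ t, ((g i) y) • φ i with hw
    have hae := coeFn_finsum_smul t (fun i => (g i) y) φ
    have : ∫⁻ x, (‖∑ i ∈ t, (φ i) x * (g i) y‖₊ : ℝ≥0∞) ^ (2:ℝ) ∂μ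
        = ∫⁻ x, (‖w x‖₊ : ℝ≥0∞) ^ (2:ℝ) ∂μ := by
      refine lintegral_congr_ae ?_
      filter_upwards [hae] with x hx
      have hcomm : (∑ i ∈ t, (φ i) x * (g i) y) = ∑ i ∈ t, ((g i) y) * (φ i) x :=
        Finset.sum_congr rfl fun i _ => mul_comm _ _
      rw [hcomm, hx]
    rw [this, lintegral_sq_eq, enorm_Lp]
  -- measurability
  have hm1 : AEMeasurable
      (fun z : X × Y => (‖∑ i ∈ t, (A (f i)) z.1 * (g i) z.2‖₊ : ℝ≥0∞) ^ (2:ℝ)) (μ.prod ν) :=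
    aem_sq (sum_tensor_aesm t (fun i => A (f i)) g)
  have hm2 : AEMeasurable
      (fun z : X × Y => (‖∑ i ∈ t, (f i) z.1 * (g i) z.2‖₊ : ℝ≥0∞) ^ (2:ℝ)) (μ.prod ν) :=
    aem_sq (sum_tensor_aesm t f g)
  have hprod1 := lintegral_prod_symm _ hm1
  have hprod2 := lintegral_prod_symm _ hm2
  rw [hprod1, hprod2]
  have hptwise : ∀ y : Y,
      ∫⁻ x, (‖∑ i ∈ t, (A (f i)) x * (g i) y‖₊ : ℝ≥0∞) ^ (2:ℝ) ∂μ
        ≤ ((‖A‖₊ : ℝ≥0∞)) ^ (2:ℝ) *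
          ∫⁻ x, (‖∑ i ∈ t, (f i) x * (g i) y‖₊ : ℝ≥0∞) ^ (2:ℝ) ∂μ := by
    intro y
    rw [key (fun i => A (f i)) y, key f y]
    have hAw : (∑ i ∈ t, ((g i) y) • A (f i) : Lp ℂ 2 μ)
        = A (∑ i ∈ t, ((g i) y) • f i) := by
      rw [map_sum]
      exact Finset.sum_congr rfl fun i _ => (A.map_smul _ _).symm
    rw [hAw]
    have hnn : ‖A (∑ i ∈ t, ((g i) y) • f i)‖₊ ≤ ‖A‖₊ * ‖(∑ i ∈ t, ((g i) y) • f i : Lp ℂ 2 μ)‖₊ :=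
      A.le_opNNNorm _
    calc ((‖A (∑ i ∈ t, ((g i) y) • f i)‖₊ : ℝ≥0∞)) ^ (2:ℝ)
        ≤ ((‖A‖₊ * ‖(∑ i ∈ t, ((g i) y) • f i : Lp ℂ 2 μ)‖₊ : ℝ≥0)) ^ (2:ℝ) := by
          exact ENNReal.rpow_le_rpow (by exact_mod_cast hnn) (by norm_num)
      _ = ((‖A‖₊ : ℝ≥0∞)) ^ (2:ℝ) * ((‖(∑ i ∈ t, ((g i) y) • f i : Lp ℂ 2 μ)‖₊ : ℝ≥0∞)) ^ (2:ℝ) := by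
          push_cast
          rw [ENNReal.mul_rpow_of_nonneg _ _ (by norm_num)]
  calc (∫⁻ y, ∫⁻ x, (‖∑ i ∈ t, (A (f i)) x * (g i) y‖₊ : ℝ≥0∞) ^ (2:ℝ) ∂μ ∂ν) ^ (1/2:ℝ)
      ≤ (∫⁻ y, ((‖A‖₊ : ℝ≥0∞)) ^ (2:ℝ) *
          ∫⁻ x, (‖∑ i ∈ t, (f i) x * (g i) y‖₊ : ℝ≥0∞) ^ (2:ℝ) ∂μ ∂ν) ^ (1/2:ℝ) := by
        gcongr
        exact hptwise _
    _ = (((‖A‖₊ : ℝ≥0∞)) ^ (2:ℝ) *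
          ∫⁻ y, ∫⁻ x, (‖∑ i ∈ t, (f i) x * (g i) y‖₊ : ℝ≥0∞) ^ (2:ℝ) ∂μ ∂ν) ^ (1/2:ℝ) := by
        rw [lintegral_const_mul' _ _ (ENNReal.rpow_ne_top_of_nonneg (by norm_num) ENNReal.coe_ne_top)]
    _ = (‖A‖₊ : ℝ≥0∞) *
        (∫⁻ y, ∫⁻ x, (‖∑ i ∈ t, (f i) x * (g i) y‖₊ : ℝ≥0∞) ^ (2:ℝ) ∂μ ∂ν) ^ (1/2:ℝ) := by
        rw [ENNReal.mul_rpow_of_nonneg _ _ (by norm_num), ← ENNReal.rpow_mul]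
        norm_num

/-- Fubini estimate: applying an operator in the second variable. -/
lemma fubini_right [SigmaFinite μ] [SigmaFinite ν]
    (B : Lp ℂ 2 ν →L[ℂ] Lp ℂ 2 ν) {ι : Type*} (t : Finset ι)
    (f : ι → Lp ℂ 2 μ) (g : ι → Lp ℂ 2 ν) :
    eLpNorm (fun z : X × Y => ∑ i ∈ t, f i z.1 * (B (g i)) z.2) 2 (μ.prod ν)
      ≤ (‖B‖₊ : ℝ≥0∞) * eLpNorm (fun z : X × Y => ∑ i ∈ t, f i z.1 * g i z.2) 2 (μ.prod ν) := by
  classical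
  rw [eLpNorm_two_eq, eLpNorm_two_eq]
  have key : ∀ (ψ : ι → Lp ℂ 2 ν) (x : X),
      ∫⁻ y, (‖∑ i ∈ t, (f i) x * (ψ i) y‖₊ : ℝ≥0∞) ^ (2:ℝ) ∂ν
        = ((‖(∑ i ∈ t, ((f i) x) • ψ i : Lp ℂ 2 ν)‖₊ : ℝ≥0∞)) ^ (2:ℝ) := by
    intro ψ x
    set w : Lp ℂ 2 ν := ∑ i ∈ t, ((f i) x) • ψ i with hw
    have hae := coeFn_finsum_smul t (fun i => (f i) x) ψ
    have : ∫⁻ y, (‖∑ i ∈ t, (f i) x * (ψ i) y‖₊ : ℝ≥0∞) ^ (2:ℝ) ∂ν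
        = ∫⁻ y, (‖w y‖₊ : ℝ≥0∞) ^ (2:ℝ) ∂ν := by
      refine lintegral_congr_ae ?_
      filter_upwards [hae] with y hy
      rw [hy]
    rw [this, lintegral_sq_eq, enorm_Lp]
  have hm1 : AEMeasurable
      (fun z : X × Y => (‖∑ i ∈ t, (f i) z.1 * (B (g i)) z.2‖₊ : ℝ≥0∞) ^ (2:ℝ)) (μ.prod ν) :=
    aem_sq (sum_tensor_aesm t f (fun i => B (g i)))
  have hm2 : AEMeasurable
      (fun z : X × Y => (‖∑ i ∈ t, (f i) z.1 * (g i) z.2‖₊ : ℝ≥0∞) ^ (2:ℝ)) (μ.prod ν) :=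
    aem_sq (sum_tensor_aesm t f g)
  have hprod1 := MeasureTheory.lintegral_prod _ hm1
  have hprod2 := MeasureTheory.lintegral_prod _ hm2
  rw [hprod1, hprod2]
  have hptwise : ∀ x : X,
      ∫⁻ y, (‖∑ i ∈ t, (f i) x * (B (g i)) y‖₊ : ℝ≥0∞) ^ (2:ℝ) ∂ν
        ≤ ((‖B‖₊ : ℝ≥0∞)) ^ (2:ℝ) *
          ∫⁻ y, (‖∑ i ∈ t, (f i) x * (g i) y‖₊ : ℝ≥0∞) ^ (2:ℝ) ∂ν := by
    intro x
    rw [key (fun i => B (g i)) x, key g x]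
    have hAw : (∑ i ∈ t, ((f i) x) • B (g i) : Lp ℂ 2 ν)
        = B (∑ i ∈ t, ((f i) x) • g i) := by
      rw [map_sum]
      exact Finset.sum_congr rfl fun i _ => (B.map_smul _ _).symm
    rw [hAw]
    have hnn : ‖B (∑ i ∈ t, ((f i) x) • g i)‖₊ ≤ ‖B‖₊ * ‖(∑ i ∈ t, ((f i) x) • g i : Lp ℂ 2 ν)‖₊ :=
      B.le_opNNNorm _
    calc ((‖B (∑ i ∈ t, ((f i) x) • g i)‖₊ : ℝ≥0∞)) ^ (2:ℝ)
        ≤ ((‖B‖₊ * ‖(∑ i ∈ t, ((f i) x) • g i : Lp ℂ 2 ν)‖₊ : ℝ≥0)) ^ (2:ℝ) := by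
          exact ENNReal.rpow_le_rpow (by exact_mod_cast hnn) (by norm_num)
      _ = ((‖B‖₊ : ℝ≥0∞)) ^ (2:ℝ) * ((‖(∑ i ∈ t, ((f i) x) • g i : Lp ℂ 2 ν)‖₊ : ℝ≥0∞)) ^ (2:ℝ) := by
          push_cast
          rw [ENNReal.mul_rpow_of_nonneg _ _ (by norm_num)]
  calc (∫⁻ x, ∫⁻ y, (‖∑ i ∈ t, (f i) x * (B (g i)) y‖₊ : ℝ≥0∞) ^ (2:ℝ) ∂ν ∂μ) ^ (1/2:ℝ)
      ≤ (∫⁻ x, ((‖B‖₊ : ℝ≥0∞)) ^ (2:ℝ) *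
          ∫⁻ y, (‖∑ i ∈ t, (f i) x * (g i) y‖₊ : ℝ≥0∞) ^ (2:ℝ) ∂ν ∂μ) ^ (1/2:ℝ) := by
        gcongr
        exact hptwise _
    _ = (((‖B‖₊ : ℝ≥0∞)) ^ (2:ℝ) *
          ∫⁻ x, ∫⁻ y, (‖∑ i ∈ t, (f i) x * (g i) y‖₊ : ℝ≥0∞) ^ (2:ℝ) ∂ν ∂μ) ^ (1/2:ℝ) := by
        rw [lintegral_const_mul' _ _ (ENNReal.rpow_ne_top_of_nonneg (by norm_num) ENNReal.coe_ne_top)]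
    _ = (‖B‖₊ : ℝ≥0∞) *
        (∫⁻ x, ∫⁻ y, (‖∑ i ∈ t, (f i) x * (g i) y‖₊ : ℝ≥0∞) ^ (2:ℝ) ∂ν ∂μ) ^ (1/2:ℝ) := by
        rw [ENNReal.mul_rpow_of_nonneg _ _ (by norm_num), ← ENNReal.rpow_mul]
        norm_num

/-- Combined Fubini estimate for an operator on each factor. -/
lemma fubini_both [SigmaFinite μ] [SigmaFinite ν]
    (A : Lp ℂ 2 μ →L[ℂ] Lp ℂ 2 μ) (B : Lp ℂ 2 ν →L[ℂ] Lp ℂ 2 ν) {ι : Type*} (t : Finset ι)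
    (f : ι → Lp ℂ 2 μ) (g : ι → Lp ℂ 2 ν) :
    eLpNorm (fun z : X × Y => ∑ i ∈ t, (A (f i)) z.1 * (B (g i)) z.2) 2 (μ.prod ν)
      ≤ (‖A‖₊ : ℝ≥0∞) * (‖B‖₊ : ℝ≥0∞) *
          eLpNorm (fun z : X × Y => ∑ i ∈ t, f i z.1 * g i z.2) 2 (μ.prod ν) := by
  calc eLpNorm (fun z : X × Y => ∑ i ∈ t, (A (f i)) z.1 * (B (g i)) z.2) 2 (μ.prod ν)
      ≤ (‖A‖₊ : ℝ≥0∞) * eLpNorm (fun z : X × Y => ∑ i ∈ t, f i z.1 * (B (g i)) z.2) 2 (μ.prod ν) :=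
        fubini_left A t f (fun i => B (g i))
    _ ≤ (‖A‖₊ : ℝ≥0∞) * ((‖B‖₊ : ℝ≥0∞) *
          eLpNorm (fun z : X × Y => ∑ i ∈ t, f i z.1 * g i z.2) 2 (μ.prod ν)) := by
        gcongr
        exact fubini_right B t f g
    _ = _ := by ring

lemma tensor_eLpNorm [SigmaFinite μ] [SigmaFinite ν] (f : Lp ℂ 2 μ) (g : Lp ℂ 2 ν) :
    eLpNorm (fun z : X × Y => f z.1 * g z.2) 2 (μ.prod ν)
      = eLpNorm f 2 μ * eLpNorm g 2 ν := by
  rw [eLpNorm_two_eq, eLpNorm_two_eq, eLpNorm_two_eq]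
  have : ∀ z : X × Y, (‖f z.1 * g z.2‖₊ : ℝ≥0∞) ^ (2:ℝ)
      = (‖f z.1‖₊ : ℝ≥0∞) ^ (2:ℝ) * (‖g z.2‖₊ : ℝ≥0∞) ^ (2:ℝ) := by
    intro z
    rw [nnnorm_mul, ENNReal.coe_mul, ENNReal.mul_rpow_of_nonneg _ _ (by norm_num)]
  simp_rw [this]
  rw [MeasureTheory.lintegral_prod_mul
      ((Lp.aestronglyMeasurable f).aemeasurable.nnnorm.coe_nnreal_ennreal.pow_const _)
      ((Lp.aestronglyMeasurable g).aemeasurable.nnnorm.coe_nnreal_ennreal.pow_const _),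
    ENNReal.mul_rpow_of_nonneg _ _ (by norm_num)]

lemma tensor_memLp [SigmaFinite μ] [SigmaFinite ν] (f : Lp ℂ 2 μ) (g : Lp ℂ 2 ν) :
    MemLp (fun z : X × Y => f z.1 * g z.2) 2 (μ.prod ν) := by
  refine ⟨tensor_aesm (Lp.aestronglyMeasurable f) (Lp.aestronglyMeasurable g), ?_⟩
  rw [tensor_eLpNorm]
  exact ENNReal.mul_lt_top (Lp.eLpNorm_lt_top f) (Lp.eLpNorm_lt_top g)

lemma sum_tensor_memLp [SigmaFinite μ] [SigmaFinite ν] {ι : Type*} (t : Finset ι)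
    (f : ι → Lp ℂ 2 μ) (g : ι → Lp ℂ 2 ν) :
    MemLp (fun z : X × Y => ∑ i ∈ t, f i z.1 * g i z.2) 2 (μ.prod ν) := by
  have := memLp_finset_sum' t fun i (_ : i ∈ t) => tensor_memLp (f i) (g i)
  simpa [Finset.sum_fn] using this

/-- The set of simple tensors in `L²` of a product. -/
def tensorSet (μ : Measure X) (ν : Measure Y) (π : Measure (X × Y)) : Set (Lp ℂ 2 π) :=
  {u | ∃ (f : Lp ℂ 2 μ) (g : Lp ℂ 2 ν), ∀ᵐ z ∂π, u z = f z.1 * g z.2}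

/-- Convergence helper: if `u - v n` is a.e. an indicator of a set whose measure tends to `0`,
then `v n → u` in `L²`. -/
lemma tendsto_of_indicator {α : Type*} [MeasurableSpace α] {m : Measure α}
    (u : Lp ℂ 2 m) (v : ℕ → Lp ℂ 2 m) (D : ℕ → Set α) (c : ℂ)
    (hD : ∀ n, MeasurableSet (D n))
    (hae : ∀ n, ⇑(u - v n) =ᵐ[m] (D n).indicator (fun _ => c))
    (hlim : Tendsto (fun n => m (D n)) atTop (nhds 0)) :
    Tendsto v atTop (nhds u) := by
  rw [tendsto_iff_dist_tendsto_zero]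
  have hdist : ∀ n, dist (v n) u = (‖c‖₊ * (m (D n)) ^ (1/2 : ℝ) : ℝ≥0∞).toReal := by
    intro n
    rw [dist_comm, dist_eq_norm, Lp.norm_def, eLpNorm_congr_ae (hae n),
      eLpNorm_indicator_const (hD n) (by norm_num) (by norm_num)]
    norm_num
  simp_rw [hdist]
  have h2 : Tendsto (fun n => (‖c‖₊ * (m (D n)) ^ (1/2 : ℝ) : ℝ≥0∞)) atTop (nhds 0) :=
    (ENNReal.tendsto_const_mul_rpow_nhds_zero_of_pos ENNReal.coe_ne_top
      (by norm_num : (0:ℝ) < 1/2)).comp hlim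
  exact (ENNReal.tendsto_toReal (by norm_num)).comp h2


variable {X Y : Type*} [MeasurableSpace X] [MeasurableSpace Y]
variable {μ : Measure X} {ν : Measure Y}

lemma indicator_finset_union {α : Type*} (E : ℕ → Set α) (hdisj : Pairwise (Function.onFun Disjoint E))
    (c : ℂ) : ∀ m : ℕ, ∀ z : α,
    (⋃ i ∈ Finset.range m, E i).indicator (fun _ => c) z
      = ∑ i ∈ Finset.range m, (E i).indicator (fun _ => c) z := by
  intro m
  induction m with
  | zero => simp
  | succ m ih =>
    intro z
    rw [Finset.sum_range_succ, ← ih z, Finset.range_add_one, Finset.set_biUnion_insert,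
      Set.indicator_union_of_disjoint
        (Set.disjoint_iUnion₂_right.2 fun i hi => hdisj (Finset.mem_range.1 hi).ne')]
    exact add_comm _ _

lemma rect_indicator_mem [SigmaFinite μ] [SigmaFinite ν] {π : Measure (X × Y)}
    (hπ : π = μ.prod ν)
    {a : Set X} {b : Set Y} (ha : MeasurableSet a) (hb : MeasurableSet b)
    (hma : μ a ≠ ∞) (hmb : ν b ≠ ∞) :
    ∃ u ∈ Submodule.span ℂ (tensorSet μ ν π),
      ⇑u =ᵐ[π] (a ×ˢ b).indicator (fun _ => (1:ℂ)) := by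
  subst hπ
  set f : Lp ℂ 2 μ := indicatorConstLp 2 ha hma (1:ℂ) with hf
  set g : Lp ℂ 2 ν := indicatorConstLp 2 hb hmb (1:ℂ) with hg
  have hfg := tensor_memLp f g
  refine ⟨hfg.toLp _, Submodule.subset_span ⟨f, g, hfg.coeFn_toLp⟩, ?_⟩
  have h1 : (fun z : X × Y => f z.1) =ᵐ[μ.prod ν]
      (fun z : X × Y => a.indicator (fun _ => (1:ℂ)) z.1) :=
    Measure.quasiMeasurePreserving_fst.ae_eq_comp indicatorConstLp_coeFn
  have h2 : (fun z : X × Y => g z.2) =ᵐ[μ.prod ν]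
      (fun z : X × Y => b.indicator (fun _ => (1:ℂ)) z.2) :=
    Measure.quasiMeasurePreserving_snd.ae_eq_comp indicatorConstLp_coeFn
  filter_upwards [hfg.coeFn_toLp, h1, h2] with z h0 hz1 hz2
  rw [h0, hz1, hz2]
  by_cases hza : z.1 ∈ a <;> by_cases hzb : z.2 ∈ b <;>
    simp [Set.indicator_apply, hza, hzb, Set.mem_prod]

theorem span_tensor_dense [SigmaFinite μ] [SigmaFinite ν] (π : Measure (X × Y))
    (hπ : π = μ.prod ν) :
    (Submodule.span ℂ (tensorSet μ ν π)).topologicalClosure = ⊤ := by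
  classical
  set S := (Submodule.span ℂ (tensorSet μ ν π)).topologicalClosure with hS
  have hSclosed : IsClosed (S : Set (Lp ℂ 2 π)) := Submodule.isClosed_topologicalClosure _
  set A : ℕ → Set X := spanningSets μ with hA
  set B : ℕ → Set Y := spanningSets ν with hB
  set R : ℕ → Set (X × Y) := fun n => A n ×ˢ B n with hR
  have hRmeas : ∀ n, MeasurableSet (R n) := fun n =>
    (measurableSet_spanningSets μ n).prod (measurableSet_spanningSets ν n)
  have hRfin : ∀ n, π (R n) ≠ ∞ := by
    intro n
    rw [hπ, hR]
    rw [Measure.prod_prod]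
    exact (ENNReal.mul_lt_top (measure_spanningSets_lt_top μ n)
      (measure_spanningSets_lt_top ν n)).ne
  have hRmono : Monotone R := fun m n hmn =>
    Set.prod_mono (monotone_spanningSets μ hmn) (monotone_spanningSets ν hmn)
  have hRunion : ⋃ n, R n = univ := by
    rw [hR]
    simp only
    rw [Set.iUnion_prod_of_monotone (monotone_spanningSets μ) (monotone_spanningSets ν),
      iUnion_spanningSets, iUnion_spanningSets, Set.univ_prod_univ]
  -- key claim by the π-λ theorem
  have key : ∀ ⦃t : Set (X × Y)⦄, MeasurableSet t →
      ∀ n, ∃ u ∈ S, ⇑u =ᵐ[π] ((t ∩ R n).indicator (fun _ => (1:ℂ))) := by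
    refine MeasurableSpace.induction_on_inter generateFrom_prod.symm isPiSystem_prod
      ?_ ?_ ?_ ?_
    · -- empty
      intro n
      refine ⟨0, zero_mem S, ?_⟩
      filter_upwards [Lp.coeFn_zero ℂ 2 π] with z hz
      simp only [Set.empty_inter, Set.indicator_empty]
      simpa using hz
    · -- rectangles
      rintro t ⟨a, ha, b, hb, rfl⟩ n
      have hfin_a : μ (a ∩ A n) ≠ ∞ :=
        ((measure_mono Set.inter_subset_right).trans_lt (measure_spanningSets_lt_top μ n)).ne
      have hfin_b : ν (b ∩ B n) ≠ ∞ :=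
        ((measure_mono Set.inter_subset_right).trans_lt (measure_spanningSets_lt_top ν n)).ne
      obtain ⟨u, hu, huae⟩ := rect_indicator_mem hπ (ha.inter (measurableSet_spanningSets μ n))
        (hb.inter (measurableSet_spanningSets ν n)) hfin_a hfin_b
      refine ⟨u, Submodule.le_topologicalClosure _ hu, ?_⟩
      rw [hR]
      simp only
      rw [Set.prod_inter_prod]
      exact huae
    · -- complement
      intro t htmeas ih n
      obtain ⟨u, hu, huae⟩ := ih n
      obtain ⟨v, hv, hvae⟩ := rect_indicator_mem hπ (measurableSet_spanningSets μ n)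
        (measurableSet_spanningSets ν n)
        (measure_spanningSets_lt_top μ n).ne (measure_spanningSets_lt_top ν n).ne
      refine ⟨v - u, sub_mem (Submodule.le_topologicalClosure _ hv) hu, ?_⟩
      have hsub : t ∩ R n ⊆ R n := Set.inter_subset_right
      have hset : tᶜ ∩ R n = R n \ (t ∩ R n) := by
        ext z; by_cases hz : z ∈ t <;> simp [hz]
      filter_upwards [Lp.coeFn_sub v u, huae, hvae] with z hz hz1 hz2
      rw [hz, Pi.sub_apply, hz1, hz2, hset, Set.indicator_sdiff hsub, Pi.sub_apply]
    · -- disjoint unions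
      intro E hEdisj hEmeas ih n
      set T : Set (X × Y) := (⋃ i, E i) ∩ R n with hT
      have hTmeas : MeasurableSet T := (MeasurableSet.iUnion hEmeas).inter (hRmeas n)
      have hTfin : π T ≠ ∞ :=
        ((measure_mono Set.inter_subset_right).trans_lt (hRfin n).lt_top).ne
      have hmem : MemLp (T.indicator fun _ => (1:ℂ)) 2 π :=
        memLp_indicator_const 2 hTmeas 1 (Or.inr hTfin)
      set w : ℕ → Lp ℂ 2 π := fun i => (ih i n).choose with hw
      have hwS : ∀ i, w i ∈ S := fun i => (ih i n).choose_spec.1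
      have hwae : ∀ i, ⇑(w i) =ᵐ[π] ((E i ∩ R n).indicator (fun _ => (1:ℂ))) :=
        fun i => (ih i n).choose_spec.2
      set v : ℕ → Lp ℂ 2 π := fun m => ∑ i ∈ Finset.range m, w i with hv
      have hvS : ∀ m, v m ∈ S := fun m => sum_mem (fun i _ => hwS i)
      set D : ℕ → Set (X × Y) := fun m => T \ ⋃ i ∈ Finset.range m, (E i ∩ R n) with hD
      have hdisj' : Pairwise (Function.onFun Disjoint fun i => E i ∩ R n) := fun i j hij =>
        ((hEdisj hij).mono Set.inter_subset_left Set.inter_subset_left)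
      have hEsub : ∀ m, (⋃ i ∈ Finset.range m, (E i ∩ R n)) ⊆ T := by
        intro m
        refine Set.iUnion₂_subset fun i _ => ?_
        rw [hT]
        exact Set.inter_subset_inter_left _ (Set.subset_iUnion E i)
      have hlim : Tendsto (fun m => π (D m)) atTop (nhds 0) := by
        have hiInter : ⋂ m, D m = ∅ := by
          rw [hD]
          simp only
          rw [← Set.diff_iUnion]
          have : ⋃ m, ⋃ i ∈ Finset.range m, (E i ∩ R n) = ⋃ i, (E i ∩ R n) := by
            apply Set.Subset.antisymm
            · exact Set.iUnion_subset fun m => Set.iUnion₂_subset fun i _ =>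
                Set.subset_iUnion (fun i => E i ∩ R n) i
            · refine Set.iUnion_subset fun i => ?_
              have h1 : E i ∩ R n ⊆ ⋃ j ∈ Finset.range (i+1), (E j ∩ R n) := by
                intro z hz
                simp only [Set.mem_iUnion, Finset.mem_range]
                exact ⟨i, Nat.lt_succ_self i, hz⟩
              exact h1.trans (Set.subset_iUnion
                (fun m => ⋃ j ∈ Finset.range m, (E j ∩ R n)) (i+1))
          rw [this, ← Set.iUnion_inter, hT, Set.diff_self]
        have := tendsto_measure_iInter_atTop
          (s := D)
          (fun m => ((hTmeas.diff (MeasurableSet.biUnion (Finset.range m).countable_toSet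
            (fun i _ => (hEmeas i).inter (hRmeas n))))).nullMeasurableSet)
          (fun m m' hmm' => Set.diff_subset_diff_right
            (Set.biUnion_subset_biUnion_left (Finset.range_subset_range.2 hmm')))
          ⟨0, ((measure_mono Set.diff_subset).trans_lt hTfin.lt_top).ne⟩
        rwa [hiInter, measure_empty] at this
      have hae : ∀ m, ⇑(hmem.toLp _ - v m) =ᵐ[π] (D m).indicator (fun _ => (1:ℂ)) := by
        intro m
        have h2 : ∀ᵐ z ∂π, ∀ i ∈ Finset.range m,
            (w i) z = (E i ∩ R n).indicator (fun _ => (1:ℂ)) z := by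
          rw [Filter.eventually_all_finset]
          exact fun i _ => hwae i
        filter_upwards [Lp.coeFn_sub (hmem.toLp _) (v m), hmem.coeFn_toLp,
          coeFn_finsum (Finset.range m) w, h2] with z hz hz0 hz1 hz2
        rw [hz, Pi.sub_apply, hz0]
        have hvz : (⇑(v m)) z = ∑ i ∈ Finset.range m, (w i) z := hz1
        rw [hvz, Finset.sum_congr rfl hz2, ← indicator_finset_union _ hdisj' 1 m z]
        have hDm : D m = T \ ⋃ i ∈ Finset.range m, (E i ∩ R n) := by rw [hD]
        rw [hDm, Set.indicator_sdiff (hEsub m), Pi.sub_apply]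
      have htend : Tendsto v atTop (nhds (hmem.toLp _)) :=
        tendsto_of_indicator _ _ D 1
          (fun m => hTmeas.diff (MeasurableSet.biUnion (Finset.range m).countable_toSet
            (fun i _ => (hEmeas i).inter (hRmeas n)))) hae hlim
      refine ⟨hmem.toLp _, ?_, by simpa [hT, Set.iUnion_inter] using hmem.coeFn_toLp⟩
      exact hSclosed.mem_of_tendsto htend (Filter.Eventually.of_forall hvS)
  -- conclude by Lp.induction
  rw [Submodule.eq_top_iff']
  intro u
  refine Lp.induction (by norm_num : (2:ℝ≥0∞) ≠ ∞)
    (motive := fun u : Lp ℂ 2 π => u ∈ S) ?_ ?_ ?_ u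
  · intro c s hs hμs
    rw [Lp.simpleFunc.coe_indicatorConst]
    -- approximate by c • (indicator of s ∩ R n)
    have hDmeas : ∀ n : ℕ, MeasurableSet (s \ R n) := fun n => hs.diff (hRmeas n)
    have hDlim : Tendsto (fun n => π (s \ R n)) atTop (nhds 0) := by
      have hiInter : ⋂ n, s \ R n = ∅ := by
        rw [← Set.diff_iUnion, hRunion, Set.diff_univ]
      have := tendsto_measure_iInter_atTop (s := fun n => s \ R n)
        (fun n => (hDmeas n).nullMeasurableSet)
        (fun m m' hmm' => Set.diff_subset_diff_right (hRmono hmm'))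
        ⟨0, ((measure_mono Set.diff_subset).trans_lt hμs).ne⟩
      rwa [hiInter, measure_empty] at this
    set v : ℕ → Lp ℂ 2 π := fun n => c • (key hs n).choose with hv
    have hvS : ∀ n, v n ∈ S := fun n => S.smul_mem c ((key hs n).choose_spec.1)
    have hvae : ∀ n, ⇑((key hs n).choose) =ᵐ[π] ((s ∩ R n).indicator (fun _ => (1:ℂ))) :=
      fun n => (key hs n).choose_spec.2
    have hae : ∀ n, ⇑(indicatorConstLp 2 hs hμs.ne c - v n)
        =ᵐ[π] (s \ R n).indicator (fun _ => c) := by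
      intro n
      filter_upwards [Lp.coeFn_sub (indicatorConstLp 2 hs hμs.ne c) (v n),
        indicatorConstLp_coeFn (p := 2) (hs := hs) (hμs := hμs.ne) (c := c),
        Lp.coeFn_smul c ((key hs n).choose), hvae n] with z hz hz0 hz1 hz2
      rw [hz, Pi.sub_apply, hz0, hv]
      simp only
      rw [hz1, Pi.smul_apply, hz2]
      have hsub : s ∩ R n ⊆ s := Set.inter_subset_left
      have hsd : s \ R n = s \ (s ∩ R n) := by rw [Set.diff_self_inter]
      rw [hsd, Set.indicator_sdiff hsub, Pi.sub_apply]
      by_cases hzs : z ∈ s <;> by_cases hzr : z ∈ s ∩ R n <;>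
        simp [Set.indicator_apply, hzs, hzr, smul_eq_mul, mul_comm]
    have htend : Tendsto v atTop (nhds (indicatorConstLp 2 hs hμs.ne c)) :=
      tendsto_of_indicator _ _ _ c hDmeas hae hDlim
    exact hSclosed.mem_of_tendsto htend (Filter.Eventually.of_forall hvS)
  · intro f g hf hg _ hfS hgS
    exact add_mem hfS hgS
  · exact hSclosed

lemma neg_one_pow_sum {ι : Type*} [DecidableEq ι] (s : Finset ι) :
    (∑ t ∈ s.powerset, (-1 : ℂ) ^ t.card) = if s = ∅ then 1 else 0 := by
  have := Finset.sum_powerset_neg_one_pow_card (x := s)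
  calc (∑ t ∈ s.powerset, (-1 : ℂ) ^ t.card)
      = ((∑ t ∈ s.powerset, (-1 : ℤ) ^ t.card : ℤ) : ℂ) := by push_cast; ring
    _ = _ := by rw [this]; split <;> norm_num

/-- Reindexing a double powerset sum. -/
lemma sum_powerset_sdiff {M : Type*} [AddCommMonoid M] {ι : Type*} [DecidableEq ι]
    (K : Finset ι) (F : Finset ι → Finset ι → M) :
    ∑ V ∈ K.powerset, ∑ W ∈ (K \ V).powerset, F V W
      = ∑ U ∈ K.powerset, ∑ V ∈ U.powerset, F V (U \ V) := by
  rw [Finset.sum_sigma', Finset.sum_sigma']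
  refine Finset.sum_nbij' (fun x => ⟨x.1 ∪ x.2, x.1⟩) (fun y => ⟨y.2, y.1 \ y.2⟩)
    ?_ ?_ ?_ ?_ ?_
  · rintro ⟨V, W⟩ hx
    rw [Finset.mem_sigma] at hx ⊢
    obtain ⟨h1, h2⟩ := hx
    rw [Finset.mem_powerset] at h1 h2
    constructor
    · exact Finset.mem_powerset.2 (Finset.union_subset h1 (h2.trans (Finset.sdiff_subset)))
    · exact Finset.mem_powerset.2 Finset.subset_union_left
  · rintro ⟨U, V⟩ hy
    rw [Finset.mem_sigma] at hy ⊢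
    obtain ⟨h1, h2⟩ := hy
    rw [Finset.mem_powerset] at h1 h2
    refine ⟨Finset.mem_powerset.2 (h2.trans h1), Finset.mem_powerset.2 ?_⟩
    exact Finset.sdiff_subset_sdiff h1 (Finset.Subset.refl V)
  · rintro ⟨V, W⟩ hx
    rw [Finset.mem_sigma, Finset.mem_powerset, Finset.mem_powerset] at hx
    have hdisj : Disjoint V W := Finset.disjoint_of_subset_right hx.2 Finset.sdiff_disjoint.symm
    show (⟨V, (V ∪ W) \ V⟩ : Σ _ : Finset ι, Finset ι) = ⟨V, W⟩
    rw [Finset.union_sdiff_cancel_left hdisj]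
  · rintro ⟨U, V⟩ hy
    rw [Finset.mem_sigma, Finset.mem_powerset, Finset.mem_powerset] at hy
    show (⟨V ∪ (U \ V), V⟩ : Σ _ : Finset ι, Finset ι) = ⟨U, V⟩
    rw [Finset.union_sdiff_of_subset hy.2]
  · rintro ⟨V, W⟩ hx
    rw [Finset.mem_sigma, Finset.mem_powerset, Finset.mem_powerset] at hx
    have hdisj : Disjoint V W := Finset.disjoint_of_subset_right hx.2 Finset.sdiff_disjoint.symm
    simp only
    rw [Finset.union_sdiff_cancel_left hdisj]

lemma inner_delta_sum {ι : Type*} [DecidableEq ι] (U : Finset ι) (a : Finset ι → ℂ) :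
    ∑ V ∈ U.powerset, ∑ W ∈ V.powerset, (-1 : ℂ) ^ (V.card - W.card) * a W = a U := by
  have hre : ∑ V ∈ U.powerset, ∑ W ∈ V.powerset, (-1 : ℂ) ^ (V.card - W.card) * a W
      = ∑ W ∈ U.powerset, ∑ W' ∈ (U \ W).powerset, (-1 : ℂ) ^ ((W ∪ W').card - W.card) * a W := by
    rw [sum_powerset_sdiff U (fun W W' => (-1 : ℂ) ^ ((W ∪ W').card - W.card) * a W)]
    refine Finset.sum_congr rfl fun V hV => Finset.sum_congr rfl fun W hW => ?_
    rw [Finset.mem_powerset] at hV hW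
    rw [Finset.union_sdiff_of_subset hW]
  rw [hre]
  have hstep : ∀ W ∈ U.powerset,
      ∑ W' ∈ (U \ W).powerset, (-1 : ℂ) ^ ((W ∪ W').card - W.card) * a W
        = (if W = U then a W else 0) := by
    intro W hW
    rw [Finset.mem_powerset] at hW
    have : ∀ W' ∈ (U \ W).powerset, (-1 : ℂ) ^ ((W ∪ W').card - W.card) * a W
        = (-1 : ℂ) ^ W'.card * a W := by
      intro W' hW'
      rw [Finset.mem_powerset] at hW'
      have hdisj : Disjoint W W' := Finset.disjoint_of_subset_right hW' Finset.sdiff_disjoint.symm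
      rw [Finset.card_union_of_disjoint hdisj]
      congr 2
      omega
    rw [Finset.sum_congr rfl this, ← Finset.sum_mul, neg_one_pow_sum]
    rcases eq_or_ne W U with rfl | hne
    · simp
    · have hne' : U \ W ≠ ∅ := fun h =>
        hne (Finset.Subset.antisymm hW (Finset.sdiff_eq_empty_iff_subset.1 h))
      simp [hne', hne]
  rw [Finset.sum_congr rfl hstep, Finset.sum_ite_eq' U.powerset U a]
  simp

/-- The discrete Leibniz rule for mixed finite differences, in closed form. -/
lemma leibniz {ι : Type*} [DecidableEq ι] (K : Finset ι) (a b : Finset ι → ℂ) :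
    ∑ U ∈ K.powerset, (-1 : ℂ) ^ (K.card - U.card) * (a U * b U)
      = ∑ V ∈ K.powerset,
          (∑ W ∈ V.powerset, (-1 : ℂ) ^ (V.card - W.card) * a W) *
          (∑ W ∈ (K \ V).powerset, (-1 : ℂ) ^ ((K \ V).card - W.card) * b (V ∪ W)) := by
  have hexp : ∑ V ∈ K.powerset,
      (∑ W ∈ V.powerset, (-1 : ℂ) ^ (V.card - W.card) * a W) *
      (∑ W ∈ (K \ V).powerset, (-1 : ℂ) ^ ((K \ V).card - W.card) * b (V ∪ W))
      = ∑ V ∈ K.powerset, ∑ W' ∈ (K \ V).powerset,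
          (∑ W ∈ V.powerset, (-1 : ℂ) ^ (V.card - W.card) * a W) *
          ((-1 : ℂ) ^ ((K \ V).card - W'.card) * b (V ∪ W')) := by
    exact Finset.sum_congr rfl fun V _ => Finset.mul_sum _ _ _
  rw [hexp, sum_powerset_sdiff K (fun V W' =>
      (∑ W ∈ V.powerset, (-1 : ℂ) ^ (V.card - W.card) * a W) *
      ((-1 : ℂ) ^ ((K \ V).card - W'.card) * b (V ∪ W')))]
  refine (Finset.sum_congr rfl fun U hU => ?_).symm
  rw [Finset.mem_powerset] at hU
  have hterm : ∀ V ∈ U.powerset,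
      (∑ W ∈ V.powerset, (-1 : ℂ) ^ (V.card - W.card) * a W) *
      ((-1 : ℂ) ^ ((K \ V).card - (U \ V).card) * b (V ∪ (U \ V)))
      = ((-1 : ℂ) ^ (K.card - U.card) * b U) *
          (∑ W ∈ V.powerset, (-1 : ℂ) ^ (V.card - W.card) * a W) := by
    intro V hV
    rw [Finset.mem_powerset] at hV
    have h1 : (K \ V).card - (U \ V).card = K.card - U.card := by
      have e1 : (K \ V).card = K.card - V.card := Finset.card_sdiff_of_subset (hV.trans hU)
      have e2 : (U \ V).card = U.card - V.card := Finset.card_sdiff_of_subset hV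
      have l1 : V.card ≤ U.card := Finset.card_le_card hV
      have l2 : U.card ≤ K.card := Finset.card_le_card hU
      omega
    rw [h1, Finset.union_sdiff_of_subset hV]
    ring
  rw [Finset.sum_congr rfl hterm, ← Finset.mul_sum, inner_delta_sum U a]
  ring

/-- If a bounded operator `T` on `L²(μ × ν)` agrees on simple tensors with
`∑ V ∈ P, A V ⊗ B V`, then `‖T‖ ≤ ∑ V ∈ P, ‖A V‖ * ‖B V‖`. -/
lemma operator_bound [SigmaFinite μ] [SigmaFinite ν] (π : Measure (X × Y))
    (hπ : π = μ.prod ν) (T : Lp ℂ 2 π →L[ℂ] Lp ℂ 2 π)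
    {κ : Type*} (P : Finset κ)
    (A : κ → (Lp ℂ 2 μ →L[ℂ] Lp ℂ 2 μ)) (B : κ → (Lp ℂ 2 ν →L[ℂ] Lp ℂ 2 ν))
    (hrep : ∀ (f : Lp ℂ 2 μ) (g : Lp ℂ 2 ν)
      (hfg : MemLp (fun z : X × Y => f z.1 * g z.2) 2 π),
      ⇑(T (hfg.toLp _)) =ᵐ[π] fun z => ∑ V ∈ P, (A V f) z.1 * (B V g) z.2) :
    ‖T‖ ≤ ∑ V ∈ P, ‖A V‖ * ‖B V‖ := by
  classical
  set M : ℝ := ∑ V ∈ P, ‖A V‖ * ‖B V‖ with hM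
  have hM0 : 0 ≤ M := Finset.sum_nonneg fun V _ =>
    mul_nonneg (norm_nonneg _) (norm_nonneg _)
  -- the span bound
  have hspan : ∀ u ∈ Submodule.span ℂ (tensorSet μ ν π), ‖T u‖ ≤ M * ‖u‖ := by
    intro u hu
    -- representation of span elements as finite sums of simple tensors
    have hrepr : ∃ (n : ℕ) (f : Fin n → Lp ℂ 2 μ) (g : Fin n → Lp ℂ 2 ν),
        ∀ᵐ z ∂π, u z = ∑ i, f i z.1 * g i z.2 := by
      induction hu using Submodule.span_induction with
      | mem x hx =>
        obtain ⟨f, g, hfg⟩ := hx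
        exact ⟨1, fun _ => f, fun _ => g, by
          filter_upwards [hfg] with z hz
          simpa using hz⟩
      | zero =>
        exact ⟨0, Fin.elim0, Fin.elim0, by
          filter_upwards [Lp.coeFn_zero ℂ 2 π] with z hz
          simpa using hz⟩
      | add x y hx hy ihx ihy =>
        obtain ⟨n₁, f₁, g₁, h₁⟩ := ihx
        obtain ⟨n₂, f₂, g₂, h₂⟩ := ihy
        refine ⟨n₁ + n₂, Fin.append f₁ f₂, Fin.append g₁ g₂, ?_⟩
        filter_upwards [h₁, h₂, Lp.coeFn_add x y] with z hz1 hz2 hz3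
        rw [hz3, Pi.add_apply, hz1, hz2, Fin.sum_univ_add]
        simp [Fin.append_left, Fin.append_right]
      | smul a x hx ihx =>
        obtain ⟨n, f, g, hfg⟩ := ihx
        refine ⟨n, fun i => a • f i, g, ?_⟩
        have hsm : ∀ᵐ z ∂π, ∀ i : Fin n, (a • f i : Lp ℂ 2 μ) z.1 = a * (f i) z.1 := by
          rw [MeasureTheory.ae_all_iff]
          intro i
          have := Measure.quasiMeasurePreserving_fst
            (μ := μ) (ν := ν) |>.ae_eq_comp (Lp.coeFn_smul a (f i))
          rw [← hπ] at this
          filter_upwards [this] with z hz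
          simpa using hz
        filter_upwards [hfg, Lp.coeFn_smul a x, hsm] with z hz1 hz2 hz3
        rw [hz2, Pi.smul_apply, hz1, smul_eq_mul, Finset.mul_sum]
        exact Finset.sum_congr rfl fun i _ => by rw [hz3 i]; ring
    obtain ⟨n, f, g, hfg⟩ := hrepr
    -- `u` is the `toLp` of the tensor sum
    have hmem_i : ∀ i : Fin n,
        MemLp (fun z : X × Y => (f i) z.1 * (g i) z.2) 2 π := fun i =>
      hπ ▸ tensor_memLp (f i) (g i)
    have hmem_u : MemLp (fun z : X × Y => ∑ i, (f i) z.1 * (g i) z.2) 2 π :=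
      hπ ▸ sum_tensor_memLp Finset.univ f g
    have hu_eq : u = ∑ i, (hmem_i i).toLp _ := by
      refine Lp.ext ?_
      have h1 := coeFn_finsum (Finset.univ : Finset (Fin n)) (fun i => (hmem_i i).toLp _)
      have h2 : ∀ᵐ z ∂π, ∀ i : Fin n, ((hmem_i i).toLp _ : Lp ℂ 2 π) z
          = (f i) z.1 * (g i) z.2 := by
        rw [MeasureTheory.ae_all_iff]
        exact fun i => (hmem_i i).coeFn_toLp
      filter_upwards [hfg, h1, h2] with z hz1 hz2 hz3
      rw [hz1, hz2]
      exact Finset.sum_congr rfl fun i _ => (hz3 i).symm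
    -- the image tensor sums
    have hmem_w : ∀ V : κ,
        MemLp (fun z : X × Y => ∑ i, (A V (f i)) z.1 * (B V (g i)) z.2) 2 π := fun V =>
      hπ ▸ sum_tensor_memLp Finset.univ (fun i => A V (f i)) (fun i => B V (g i))
    have hTu : T u = ∑ V ∈ P, (hmem_w V).toLp _ := by
      refine Lp.ext ?_
      have hL : ⇑(T u) =ᵐ[π] fun z => ∑ i : Fin n, ∑ V ∈ P, (A V (f i)) z.1 * (B V (g i)) z.2 := by
        rw [hu_eq, map_sum]
        have h1 := coeFn_finsum (Finset.univ : Finset (Fin n)) (fun i => T ((hmem_i i).toLp _))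
        have h2 : ∀ᵐ z ∂π, ∀ i : Fin n, (T ((hmem_i i).toLp _)) z
            = ∑ V ∈ P, (A V (f i)) z.1 * (B V (g i)) z.2 := by
          rw [MeasureTheory.ae_all_iff]
          exact fun i => hrep (f i) (g i) (hmem_i i)
        filter_upwards [h1, h2] with z hz1 hz2
        rw [hz1]
        exact Finset.sum_congr rfl fun i _ => hz2 i
      have hR : ⇑(∑ V ∈ P, (hmem_w V).toLp _)
          =ᵐ[π] fun z => ∑ V ∈ P, ∑ i : Fin n, (A V (f i)) z.1 * (B V (g i)) z.2 := by
        have h1 := coeFn_finsum P (fun V => (hmem_w V).toLp _)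
        have h2 : ∀ᵐ z ∂π, ∀ V ∈ P, ((hmem_w V).toLp _ : Lp ℂ 2 π) z
            = ∑ i : Fin n, (A V (f i)) z.1 * (B V (g i)) z.2 := by
          rw [Filter.eventually_all_finset]
          exact fun V _ => (hmem_w V).coeFn_toLp
        filter_upwards [h1, h2] with z hz1 hz2
        rw [hz1]
        exact Finset.sum_congr rfl hz2
      filter_upwards [hL, hR] with z hz1 hz2
      rw [hz1, hz2, Finset.sum_comm]
    -- norms
    have hnorm_u : eLpNorm (fun z : X × Y => ∑ i, (f i) z.1 * (g i) z.2) 2 π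
        = eLpNorm (⇑u) 2 π := (eLpNorm_congr_ae hfg).symm
    have hW : ∀ V ∈ P, ‖((hmem_w V).toLp _ : Lp ℂ 2 π)‖ ≤ ‖A V‖ * ‖B V‖ * ‖u‖ := by
      intro V _
      rw [Lp.norm_def, eLpNorm_congr_ae (hmem_w V).coeFn_toLp]
      have hfub : eLpNorm (fun z : X × Y => ∑ i, (A V (f i)) z.1 * (B V (g i)) z.2) 2 π
          ≤ (‖A V‖₊ : ℝ≥0∞) * (‖B V‖₊ : ℝ≥0∞) * eLpNorm (⇑u) 2 π := by
        rw [← hnorm_u, hπ]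
        exact fubini_both (A V) (B V) Finset.univ f g
      have hfin : (‖A V‖₊ : ℝ≥0∞) * (‖B V‖₊ : ℝ≥0∞) * eLpNorm (⇑u) 2 π ≠ ∞ :=
        ENNReal.mul_ne_top (ENNReal.mul_ne_top ENNReal.coe_ne_top ENNReal.coe_ne_top)
          (Lp.eLpNorm_ne_top u)
      calc (eLpNorm (fun z : X × Y => ∑ i, (A V (f i)) z.1 * (B V (g i)) z.2) 2 π).toReal
          ≤ ((‖A V‖₊ : ℝ≥0∞) * (‖B V‖₊ : ℝ≥0∞) * eLpNorm (⇑u) 2 π).toReal :=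
            ENNReal.toReal_mono hfin hfub
        _ = ‖A V‖ * ‖B V‖ * ‖u‖ := by
            rw [ENNReal.toReal_mul, ENNReal.toReal_mul, ENNReal.coe_toReal,
              ENNReal.coe_toReal, coe_nnnorm, coe_nnnorm, ← Lp.norm_def]
    calc ‖T u‖ = ‖∑ V ∈ P, ((hmem_w V).toLp _ : Lp ℂ 2 π)‖ := by rw [hTu]
      _ ≤ ∑ V ∈ P, ‖((hmem_w V).toLp _ : Lp ℂ 2 π)‖ := norm_sum_le _ _
      _ ≤ ∑ V ∈ P, ‖A V‖ * ‖B V‖ * ‖u‖ := Finset.sum_le_sum hW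
      _ = M * ‖u‖ := by rw [hM, Finset.sum_mul]
  -- extend to all of `L²` by density
  have hdense := span_tensor_dense π hπ
  have hclosed : IsClosed {u : Lp ℂ 2 π | ‖T u‖ ≤ M * ‖u‖} :=
    isClosed_le (T.continuous.norm) (continuous_const.mul continuous_norm)
  have hall : ∀ u : Lp ℂ 2 π, ‖T u‖ ≤ M * ‖u‖ := by
    intro u
    have h1 : u ∈ (Submodule.span ℂ (tensorSet μ ν π)).topologicalClosure := by
      rw [hdense]; trivial
    have h2 : (Submodule.span ℂ (tensorSet μ ν π) : Set (Lp ℂ 2 π))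
        ⊆ {u : Lp ℂ 2 π | ‖T u‖ ≤ M * ‖u‖} := fun v hv => hspan v hv
    have h3 : closure (Submodule.span ℂ (tensorSet μ ν π) : Set (Lp ℂ 2 π))
        ⊆ {u : Lp ℂ 2 π | ‖T u‖ ≤ M * ‖u‖} := hclosed.closure_subset_iff.2 h2
    exact h3 (by rw [← Submodule.topologicalClosure_coe]; exact h1)
  exact T.opNorm_le_bound hM0 hall

end Stmt9Aux

open Stmt9Aux

set_option maxHeartbeats 1000000

/-- Tensor stability of the cancellation condition: if two families of bounded operators on
`L²(ℝ^{d₁})` and `L²(ℝ^{d₂})` satisfy the difference bounds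
`‖Δ_h^K H_s^{(i)}‖ ≲ ∏_{j∈K} h_j/s_j` for admissible `s, h` (both in a common order-convex
cube `Q`), then so does the family of their tensor products on `L²(ℝ^{d₁} × ℝ^{d₂})`. -/
theorem stmt9 (d₁ d₂ k : ℕ) (hk : 0 < k)
    (H1 : (Fin k → ℝ) →
      (Lp ℂ 2 (volume : Measure (Fin d₁ → ℝ)) →L[ℂ] Lp ℂ 2 (volume : Measure (Fin d₁ → ℝ))))
    (H2 : (Fin k → ℝ) →
      (Lp ℂ 2 (volume : Measure (Fin d₂ → ℝ)) →L[ℂ] Lp ℂ 2 (volume : Measure (Fin d₂ → ℝ))))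
    (H12 : (Fin k → ℝ) →
      (Lp ℂ 2 (volume : Measure ((Fin d₁ → ℝ) × (Fin d₂ → ℝ))) →L[ℂ]
        Lp ℂ 2 (volume : Measure ((Fin d₁ → ℝ) × (Fin d₂ → ℝ)))))
    (Q : Set (Fin k → ℝ))
    (hQconv : ∀ s t u : Fin k → ℝ, s ∈ Q → t ∈ Q →
      (∀ i, s i ≤ u i ∧ u i ≤ t i) → u ∈ Q)
    -- `H12 s` acts as the tensor product `H1 s ⊗ H2 s` on simple tensors
    (htensor : ∀ (s : Fin k → ℝ) (f : Lp ℂ 2 (volume : Measure (Fin d₁ → ℝ)))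
        (g : Lp ℂ 2 (volume : Measure (Fin d₂ → ℝ)))
        (hfg : MemLp (fun z : (Fin d₁ → ℝ) × (Fin d₂ → ℝ) => f z.1 * g z.2) 2 volume),
      (H12 s (hfg.toLp _) : ((Fin d₁ → ℝ) × (Fin d₂ → ℝ)) → ℂ) =ᵐ[volume]
        fun z => H1 s f z.1 * H2 s g z.2)
    (C₁ C₂ : ℝ)
    (hH1 : ∀ (K : Finset (Fin k)) (s h : Fin k → ℝ), (∀ i, 0 < s i) → (∀ i, 0 ≤ h i) →
      s ∈ Q → s + h ∈ Q → ‖deltaK H1 K h s‖ ≤ C₁ * ∏ i ∈ K, h i / s i)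
    (hH2 : ∀ (K : Finset (Fin k)) (s h : Fin k → ℝ), (∀ i, 0 < s i) → (∀ i, 0 ≤ h i) →
      s ∈ Q → s + h ∈ Q → ‖deltaK H2 K h s‖ ≤ C₂ * ∏ i ∈ K, h i / s i) :
    ∃ C : ℝ, ∀ (K : Finset (Fin k)) (s h : Fin k → ℝ), (∀ i, 0 < s i) → (∀ i, 0 ≤ h i) →
      s ∈ Q → s + h ∈ Q → ‖deltaK H12 K h s‖ ≤ C * ∏ i ∈ K, h i / s i := by
  classical
  have hπ : (volume : Measure ((Fin d₁ → ℝ) × (Fin d₂ → ℝ)))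
      = (volume : Measure (Fin d₁ → ℝ)).prod (volume : Measure (Fin d₂ → ℝ)) :=
    MeasureTheory.Measure.volume_eq_prod _ _
  set C₁' := max C₁ 0 with hC₁'
  set C₂' := max C₂ 0 with hC₂'
  refine ⟨2^k * (C₁' * C₂'), ?_⟩
  intro K s h hs hh hsQ hshQ
  have hprod_nonneg : ∀ S : Finset (Fin k), (0:ℝ) ≤ ∏ i ∈ S, h i / s i :=
    fun S => Finset.prod_nonneg fun i _ => div_nonneg (hh i) (hs i).le
  set pt : Finset (Fin k) → (Fin k → ℝ) := fun U => fun i => if i ∈ U then s i + h i else s i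
    with hpt
  set A : Finset (Fin k) →
      (Lp ℂ 2 (volume : Measure (Fin d₁ → ℝ)) →L[ℂ] Lp ℂ 2 (volume : Measure (Fin d₁ → ℝ))) :=
    fun V => deltaK H1 V h s with hA
  set B : Finset (Fin k) →
      (Lp ℂ 2 (volume : Measure (Fin d₂ → ℝ)) →L[ℂ] Lp ℂ 2 (volume : Measure (Fin d₂ → ℝ))) :=
    fun V => deltaK H2 (K \ V) h (pt V) with hB
  -- the tensor representation of `deltaK H12` on simple tensors, via the Leibniz rule
  have hrep : ∀ (f : Lp ℂ 2 (volume : Measure (Fin d₁ → ℝ)))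
      (g : Lp ℂ 2 (volume : Measure (Fin d₂ → ℝ)))
      (hfg : MemLp (fun z : (Fin d₁ → ℝ) × (Fin d₂ → ℝ) => f z.1 * g z.2) 2 volume),
      ⇑((deltaK H12 K h s) (hfg.toLp _)) =ᵐ[volume]
        fun z => ∑ V ∈ K.powerset, (A V f) z.1 * (B V g) z.2 := by
    intro f g hfg
    have hL : ⇑((deltaK H12 K h s) (hfg.toLp _)) =ᵐ[volume]
        fun z => ∑ U ∈ K.powerset, (-1:ℂ)^(K.card - U.card) *
          ((H1 (pt U) f) z.1 * (H2 (pt U) g) z.2) := by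
      have happ : (deltaK H12 K h s) (hfg.toLp _)
          = ∑ U ∈ K.powerset, ((-1:ℂ)^(K.card - U.card)) • (H12 (pt U) (hfg.toLp _)) := by
        simp [deltaK, hpt]
      rw [happ]
      have h1 := coeFn_finsum_smul K.powerset (fun U => (-1:ℂ)^(K.card - U.card))
        (fun U => H12 (pt U) (hfg.toLp _))
      have h2 : ∀ᵐ z ∂(volume : Measure ((Fin d₁ → ℝ) × (Fin d₂ → ℝ))), ∀ U ∈ K.powerset,
          (H12 (pt U) (hfg.toLp _)) z = (H1 (pt U) f) z.1 * (H2 (pt U) g) z.2 := by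
        rw [Filter.eventually_all_finset]
        exact fun U _ => htensor (pt U) f g hfg
      filter_upwards [h1, h2] with z hz1 hz2
      rw [hz1]
      exact Finset.sum_congr rfl fun U hU => by rw [hz2 U hU]
    have hAcoe : ∀ᵐ z ∂(volume : Measure ((Fin d₁ → ℝ) × (Fin d₂ → ℝ))), ∀ V ∈ K.powerset,
        (A V f) z.1 = ∑ W ∈ V.powerset, (-1:ℂ)^(V.card - W.card) * (H1 (pt W) f) z.1 := by
      rw [Filter.eventually_all_finset]
      intro V _
      have hAV : A V f = ∑ W ∈ V.powerset, ((-1:ℂ)^(V.card - W.card)) • (H1 (pt W) f) := by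
        simp [hA, deltaK, hpt]
      have h1 := coeFn_finsum_smul V.powerset (fun W => (-1:ℂ)^(V.card - W.card))
        (fun W => H1 (pt W) f)
      rw [← hAV] at h1
      have h2 := Measure.quasiMeasurePreserving_fst
        (μ := (volume : Measure (Fin d₁ → ℝ))) (ν := (volume : Measure (Fin d₂ → ℝ)))
        |>.ae_eq_comp h1
      rw [← hπ] at h2
      filter_upwards [h2] with z hz
      exact hz
    have hBcoe : ∀ᵐ z ∂(volume : Measure ((Fin d₁ → ℝ) × (Fin d₂ → ℝ))), ∀ V ∈ K.powerset,
        (B V g) z.2 = ∑ W ∈ (K \ V).powerset,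
          (-1:ℂ)^((K \ V).card - W.card) * (H2 (pt (V ∪ W)) g) z.2 := by
      rw [Filter.eventually_all_finset]
      intro V hV
      have hBV' : B V = ∑ W ∈ (K \ V).powerset,
          ((-1:ℂ)^((K \ V).card - W.card)) • H2 (pt (V ∪ W)) := by
        rw [hB]
        show deltaK H2 (K \ V) h (pt V) = _
        unfold deltaK
        refine Finset.sum_congr rfl fun W hW => ?_
        rw [Finset.mem_powerset] at hW
        have harg : (fun i => if i ∈ W then pt V i + h i else pt V i) = pt (V ∪ W) := by
          funext j
          rw [hpt]
          by_cases hjW : j ∈ W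
          · have hjKV := hW hjW
            rw [Finset.mem_sdiff] at hjKV
            simp [hjW, hjKV.2, Finset.mem_union]
          · by_cases hjV : j ∈ V <;> simp [hjW, hjV, Finset.mem_union]
        rw [harg]
      have hBV : B V g = ∑ W ∈ (K \ V).powerset,
          ((-1:ℂ)^((K \ V).card - W.card)) • (H2 (pt (V ∪ W)) g) := by
        rw [hBV']
        simp
      have h1 := coeFn_finsum_smul (K \ V).powerset
        (fun W => (-1:ℂ)^((K \ V).card - W.card)) (fun W => H2 (pt (V ∪ W)) g)
      rw [← hBV] at h1
      have h2 := Measure.quasiMeasurePreserving_snd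
        (μ := (volume : Measure (Fin d₁ → ℝ))) (ν := (volume : Measure (Fin d₂ → ℝ)))
        |>.ae_eq_comp h1
      rw [← hπ] at h2
      filter_upwards [h2] with z hz
      exact hz
    filter_upwards [hL, hAcoe, hBcoe] with z hz hAz hBz
    rw [hz, leibniz K (fun U => (H1 (pt U) f) z.1) (fun U => (H2 (pt U) g) z.2)]
    exact Finset.sum_congr rfl fun V hV => by rw [hAz V hV, hBz V hV]
  have hbound := operator_bound (μ := (volume : Measure (Fin d₁ → ℝ)))
    (ν := (volume : Measure (Fin d₂ → ℝ)))
    (volume : Measure ((Fin d₁ → ℝ) × (Fin d₂ → ℝ))) hπ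
    (deltaK H12 K h s) K.powerset A B hrep
  -- norm bounds on the factors
  have hAnorm : ∀ V ∈ K.powerset, ‖A V‖ ≤ C₁' * ∏ i ∈ V, h i / s i := by
    intro V hV
    rw [Finset.mem_powerset] at hV
    set h' : Fin k → ℝ := fun i => if i ∈ V then h i else 0 with hh'
    have heq : A V = deltaK H1 V h' s := by
      rw [hA]
      refine Finset.sum_congr rfl fun U hU => ?_
      rw [Finset.mem_powerset] at hU
      congr 2
      funext j
      by_cases hj : j ∈ U
      · simp [hj, hh', hU hj]
      · simp [hj]
    have hs'Q : s + h' ∈ Q := by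
      refine hQconv s (s + h) (s + h') hsQ hshQ fun i => ?_
      simp only [Pi.add_apply, hh']
      constructor
      · by_cases hi : i ∈ V <;> simp [hi, hh i]
      · by_cases hi : i ∈ V <;> simp [hi, hh i]
    have := hH1 V s h' hs (fun i => by by_cases hi : i ∈ V <;> simp [hh', hi, hh i]) hsQ hs'Q
    rw [← heq] at this
    refine this.trans ?_
    have hpe : ∏ i ∈ V, h' i / s i = ∏ i ∈ V, h i / s i :=
      Finset.prod_congr rfl fun i hi => by simp [hh', hi]
    rw [hpe]
    exact mul_le_mul_of_nonneg_right (le_max_left _ _) (hprod_nonneg V)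
  have hBnorm : ∀ V ∈ K.powerset, ‖B V‖ ≤ C₂' * ∏ i ∈ K \ V, h i / s i := by
    intro V hV
    rw [Finset.mem_powerset] at hV
    set h'' : Fin k → ℝ := fun i => if i ∈ K \ V then h i else 0 with hh''
    have heq : B V = deltaK H2 (K \ V) h'' (pt V) := by
      rw [hB]
      refine Finset.sum_congr rfl fun U hU => ?_
      rw [Finset.mem_powerset] at hU
      congr 2
      funext j
      by_cases hj : j ∈ U
      · have hj2 := Finset.mem_sdiff.1 (hU hj)
        simp [hj, hh'', Finset.mem_sdiff, hj2.1, hj2.2]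
      · simp [hj]
    have hptpos : ∀ i, 0 < pt V i := by
      intro i
      rw [hpt]
      by_cases hi : i ∈ V <;> simp [hi]
      · linarith [hs i, hh i]
      · exact hs i
    have hptQ : pt V ∈ Q := by
      refine hQconv s (s + h) (pt V) hsQ hshQ fun i => ?_
      rw [hpt]
      by_cases hi : i ∈ V <;> simp [hi, hh i]
    have hpt'Q : pt V + h'' ∈ Q := by
      refine hQconv s (s + h) (pt V + h'') hsQ hshQ fun i => ?_
      simp only [Pi.add_apply, hpt, hh'']
      by_cases hi : i ∈ V
      · have : i ∉ K \ V := fun hc => (Finset.mem_sdiff.1 hc).2 hi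
        simp [hi, this, hh i]
      · by_cases hi' : i ∈ K \ V <;> simp [hi, hi', hh i]
    have := hH2 (K \ V) (pt V) h'' hptpos
      (fun i => by simp only [hh'']; split <;> simp [hh i]) hptQ hpt'Q
    rw [← heq] at this
    refine this.trans ?_
    have hpe : ∏ i ∈ K \ V, h'' i / pt V i = ∏ i ∈ K \ V, h i / s i := by
      refine Finset.prod_congr rfl fun i hi => ?_
      have hiV := Finset.mem_sdiff.1 hi
      simp [hh'', hi, hpt, hiV.1, hiV.2]
    rw [hpe]
    refine mul_le_mul_of_nonneg_right (le_max_left _ _) (hprod_nonneg _)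
  calc ‖deltaK H12 K h s‖ ≤ ∑ V ∈ K.powerset, ‖A V‖ * ‖B V‖ := hbound
    _ ≤ ∑ V ∈ K.powerset, (C₁' * ∏ i ∈ V, h i / s i) * (C₂' * ∏ i ∈ K \ V, h i / s i) := by
        refine Finset.sum_le_sum fun V hV => ?_
        refine mul_le_mul (hAnorm V hV) (hBnorm V hV) (norm_nonneg _) ?_
        exact mul_nonneg (le_max_of_le_right le_rfl) (hprod_nonneg V)
    _ = ∑ V ∈ K.powerset, (C₁' * C₂') * ∏ i ∈ K, h i / s i := by
        refine Finset.sum_congr rfl fun V hV => ?_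
        rw [Finset.mem_powerset] at hV
        rw [← Finset.prod_sdiff hV]
        ring
    _ = (2:ℝ)^(K.card) * ((C₁' * C₂') * ∏ i ∈ K, h i / s i) := by
        rw [Finset.sum_const, Finset.card_powerset, nsmul_eq_mul]
        push_cast
        ring
    _ ≤ (2:ℝ)^k * ((C₁' * C₂') * ∏ i ∈ K, h i / s i) := by
        refine mul_le_mul_of_nonneg_right ?_ ?_
        · refine pow_le_pow_right₀ (by norm_num) ?_
          calc K.card ≤ Fintype.card (Fin k) := K.card_le_univ
            _ = k := Fintype.card_fin k
        · exact mul_nonneg (mul_nonneg (le_max_of_le_right le_rfl)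
            (le_max_of_le_right le_rfl)) (hprod_nonneg K)
    _ = 2^k * (C₁' * C₂') * ∏ i ∈ K, h i / s i := by ring
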